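/- Fix an odd prime p and let χ be the Legendre symbol modulo p, viewed as a complex-valued sequence on ℤ/pℤ. Then for all m, n ∈ ℤ/pℤ \ {0}, the number e^{-πi m̃ñ/p} · A_p(χ)[m,n] is real, where m̃, ñ ∈ {0,1,...,p-1} are the integer representatives of m and n. -/

import Mathlib

open scoped BigOperators Classical

noncomputable section

/-- The Legendre symbol modulo `p`, viewed as a complex-valued function on `ZMod p`:
`1` on nonzero quadratic residues, `0` at `0`, `-1` on quadratic nonresidues. -/
def chi (p : ℕ) (k : ZMod p) : ℂ :=
  if k = 0 then 0 else if ∃ m : ZMod p, m ^ 2 = k then 1 else -1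

/-- The Legendre symbol modulo `p`, viewed as an integer-valued function on `ZMod p`. -/
def chiZ (p : ℕ) (k : ZMod p) : ℤ :=
  if k = 0 then 0 else if ∃ m : ZMod p, m ^ 2 = k then 1 else -1

/-- The discrete periodic (narrow band) ambiguity function
`A_p(u)[m,n] = (1/p) ∑_k u[k+m] conj(u[k]) e^{-2πi k n/p}`. -/
def ambig (p : ℕ) [NeZero p] (u : ZMod p → ℂ) (m n : ZMod p) : ℂ :=
  (1 / (p : ℂ)) * ∑ k : ZMod p,
    u (k + m) * (starRingEnd ℂ) (u k) *
      Complex.exp (-2 * Real.pi * Complex.I * (k.val : ℂ) * (n.val : ℂ) / (p : ℂ))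

/-- The Kloosterman sum `K[a,b;p] = ∑_{x ∈ (ℤ/pℤ)ˣ} e^{2πi(ax + b x⁻¹)/p}`. -/
def kloost (p : ℕ) [NeZero p] (a b : ℤ) : ℂ :=
  ∑ x : (ZMod p)ˣ,
    Complex.exp (2 * Real.pi * Complex.I *
      ((((a : ZMod p) * (x : ZMod p) + (b : ZMod p) * ((x⁻¹ : (ZMod p)ˣ) : ZMod p)).val : ℂ))
        / (p : ℂ))

/-- The Björck sequence of length `p` for a prime `p ≡ 1 (mod 4)`:
`u[k] = exp(iθχ(k))` with `θ = arccos (1/(1+√p))`. -/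
def bjorck1 (p : ℕ) (k : ZMod p) : ℂ :=
  Complex.exp (Complex.I * (Real.arccos (1 / (1 + Real.sqrt p)) : ℂ) * chi p k)

/-- The Björck sequence of length `p` for a prime `p ≡ 3 (mod 4)`:
`u[k] = exp(iφ)` with `φ = arccos ((1-p)/(1+p))` if `k` is a quadratic nonresidue,
and `u[k] = 1` otherwise. -/
def bjorck3 (p : ℕ) (k : ZMod p) : ℂ :=
  if ∀ m : ZMod p, m ^ 2 ≠ k then
    Complex.exp (Complex.I * (Real.arccos ((1 - (p : ℝ)) / (1 + (p : ℝ))) : ℂ))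
  else 1

end

lemma chi_eq (p : ℕ) [Fact p.Prime] (k : ZMod p) :
    chi p k = ((quadraticChar (ZMod p) k : ℤ) : ℂ) := by
  rw [chi, quadraticChar_apply, quadraticCharFun]
  by_cases h0 : k = 0
  · simp [h0]
  · simp only [h0, if_false]
    by_cases hsq : IsSquare k
    · rw [if_pos hsq, if_pos]
      · norm_num
      · obtain ⟨r, hr⟩ := hsq; exact ⟨r, by rw [sq]; exact hr.symm⟩
    · rw [if_neg hsq, if_neg]
      · norm_num
      · rintro ⟨r, hr⟩; exact hsq ⟨r, by rw [← hr, sq]⟩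

lemma conj_chi (p : ℕ) (k : ZMod p) : (starRingEnd ℂ) (chi p k) = chi p k := by
  rw [chi]; split_ifs <;> simp

lemma chi_neg_mul (p : ℕ) [Fact p.Prime] (hp2 : p ≠ 2) (x y : ZMod p) :
    chi p (-x) * chi p (-y) = chi p x * chi p y := by
  have h1 : (-1 : ZMod p) ≠ 0 := by
    simp only [neg_ne_zero]; exact one_ne_zero
  have key : quadraticChar (ZMod p) (-x) * quadraticChar (ZMod p) (-y)
      = quadraticChar (ZMod p) x * quadraticChar (ZMod p) y := by
    have hx : (-x : ZMod p) = (-1) * x := by ring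
    have hy : (-y : ZMod p) = (-1) * y := by ring
    rw [hx, hy, map_mul, map_mul]
    have := quadraticChar_sq_one (F := ZMod p) h1
    linear_combination (quadraticChar (ZMod p) x * quadraticChar (ZMod p) y) * this
  rw [chi_eq, chi_eq, chi_eq, chi_eq, ← Int.cast_mul, ← Int.cast_mul, key]

theorem legendre_ambiguity_real (p : ℕ) [hp : Fact p.Prime] (hp2 : p ≠ 2)
    (m n : ZMod p) (hm : m ≠ 0) (hn : n ≠ 0) :
    (Complex.exp (-(Real.pi : ℂ) * Complex.I * (m.val : ℂ) * (n.val : ℂ) / (p : ℂ)) *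
        ambig p (chi p) m n).im = 0 := by
  have hp0 : (p : ℂ) ≠ 0 := Nat.cast_ne_zero.mpr hp.out.ne_zero
  rw [← Complex.conj_eq_iff_im]
  simp only [ambig, conj_chi]
  set M : ℂ := ((m.val : ℕ) : ℂ) with hM
  set N : ℂ := ((n.val : ℕ) : ℂ) with hN
  set c : ℂ := -(Real.pi : ℂ) * Complex.I * M * N / (p : ℂ) with hc
  have hconjc : (starRingEnd ℂ) c = -c := by
    rw [hc, hM, hN]
    simp only [map_div₀, map_mul, map_neg, Complex.conj_I, Complex.conj_ofReal, map_natCast]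
    ring
  have key : Complex.exp (-c) *
      ∑ k : ZMod p, chi p (k + m) * chi p k *
        Complex.exp (2 * Real.pi * Complex.I * ((k.val : ℕ) : ℂ) * N / (p : ℂ))
      = Complex.exp c *
      ∑ k : ZMod p, chi p (k + m) * chi p k *
        Complex.exp (-2 * Real.pi * Complex.I * ((k.val : ℕ) : ℂ) * N / (p : ℂ)) := by
    rw [Finset.mul_sum, Finset.mul_sum]
    refine Fintype.sum_equiv ((Equiv.neg (ZMod p)).trans (Equiv.subRight m)) _ _ (fun k => ?_)
    simp only [Equiv.trans_apply, Equiv.neg_apply, Equiv.subRight_apply]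
    have hchi : chi p (-k - m + m) * chi p (-k - m) = chi p (k + m) * chi p k := by
      rw [show (-k - m + m : ZMod p) = -k by ring,
        show (-k - m : ZMod p) = -(k + m) by ring, chi_neg_mul p hp2, mul_comm]
    have hdvd : p ∣ (m.val + k.val + (-k - m).val) := by
      rw [← ZMod.natCast_eq_zero_iff]
      push_cast
      rw [ZMod.natCast_zmod_val, ZMod.natCast_zmod_val, ZMod.natCast_zmod_val]
      ring
    obtain ⟨t, ht⟩ := hdvd
    have hcast : M + ((k.val : ℕ) : ℂ) + (((-k - m).val : ℕ) : ℂ) = (p : ℂ) * (t : ℂ) := by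
      rw [hM]; exact_mod_cast congrArg (Nat.cast : ℕ → ℂ) ht
    have hexp : Complex.exp (-c) *
        Complex.exp (2 * Real.pi * Complex.I * ((k.val : ℕ) : ℂ) * N / (p : ℂ))
        = Complex.exp c *
          Complex.exp (-2 * Real.pi * Complex.I * (((-k - m).val : ℕ) : ℂ) * N / (p : ℂ)) := by
      rw [← Complex.exp_add, ← Complex.exp_add, Complex.exp_eq_exp_iff_exists_int]
      refine ⟨(t : ℤ) * (n.val : ℤ), ?_⟩
      have h1 : (((t : ℤ) * (n.val : ℤ) : ℤ) : ℂ) = (t : ℂ) * N := by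
        rw [hN]; norm_cast
      rw [h1, hc]
      field_simp
      linear_combination (2 * N) * hcast
    rw [hchi]
    calc Complex.exp (-c) * (chi p (k + m) * chi p k *
          Complex.exp (2 * Real.pi * Complex.I * ((k.val : ℕ) : ℂ) * N / (p : ℂ)))
        = chi p (k + m) * chi p k * (Complex.exp (-c) *
            Complex.exp (2 * Real.pi * Complex.I * ((k.val : ℕ) : ℂ) * N / (p : ℂ))) := by ring
      _ = chi p (k + m) * chi p k * (Complex.exp c *
            Complex.exp (-2 * Real.pi * Complex.I * (((-k - m).val : ℕ) : ℂ) * N / (p : ℂ))) := by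
          rw [hexp]
      _ = _ := by ring
  have hsum : ∀ k : ZMod p, (starRingEnd ℂ)
      (chi p (k + m) * chi p k *
        Complex.exp (-2 * Real.pi * Complex.I * ((k.val : ℕ) : ℂ) * N / (p : ℂ)))
      = chi p (k + m) * chi p k *
        Complex.exp (2 * Real.pi * Complex.I * ((k.val : ℕ) : ℂ) * N / (p : ℂ)) := by
    intro k
    rw [map_mul, map_mul, conj_chi, conj_chi, ← Complex.exp_conj]
    congr 1
    rw [hN]
    simp only [map_div₀, map_mul, map_neg, Complex.conj_I, Complex.conj_ofReal, map_natCast,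
      map_ofNat]
    ring
  rw [map_mul, ← Complex.exp_conj, hconjc, map_mul, map_sum]
  simp only [hsum]
  rw [map_div₀, map_one, map_natCast]
  rw [mul_left_comm, key, mul_left_comm]
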